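/- Let n ∈ ℕ, r > 0, and let f, g be functions holomorphic on the punctured disk {z : 0 < |z| < r} such that there exist coefficients a_0, …, a_n ∈ ℂ and b_0, …, b_n ∈ ℂ and functions F, G holomorphic on {z : |z| < r} with f(z) = ∑_{k=0}^{n} a_k z^{2k−n} + z^{n+1} F(z) and g(z) = ∑_{k=0}^{n} b_k z^{2k−n} + z^{n+1} G(z) for 0 < |z| < r. Then for every ρ with 0 < ρ < r, the contour integral ∮_{|z|=ρ} f(z) g(z) dz equals 0; equivalently, the residue of f·g at 0 is zero. -/

import Mathlib

open Metric Finset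

lemma circleIntegral_add' {f g : ℂ → ℂ} {c : ℂ} {R : ℝ} (hf : CircleIntegrable f c R)
    (hg : CircleIntegrable g c R) :
    (∮ z in C(c, R), f z + g z) = (∮ z in C(c, R), f z) + ∮ z in C(c, R), g z := by
  simp only [circleIntegral, smul_add, intervalIntegral.integral_add hf.out hg.out]

lemma circleIntegral_finset_sum' {ι : Type*} (s : Finset ι) {c : ℂ} {R : ℝ} {f : ι → ℂ → ℂ}
    (h : ∀ i ∈ s, CircleIntegrable (f i) c R) :
    (∮ z in C(c, R), ∑ i ∈ s, f i z) = ∑ i ∈ s, ∮ z in C(c, R), f i z := by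
  simp only [circleIntegral, Finset.smul_sum]
  exact intervalIntegral.integral_finset_sum fun i hi => (h i hi).out

theorem stmt_3 (n : ℕ) (r : ℝ) (hr : 0 < r) (f g F G : ℂ → ℂ) (a b : ℕ → ℂ)
    (hf : DifferentiableOn ℂ f {z : ℂ | 0 < ‖z‖ ∧ ‖z‖ < r})
    (hg : DifferentiableOn ℂ g {z : ℂ | 0 < ‖z‖ ∧ ‖z‖ < r})
    (hF : DifferentiableOn ℂ F {z : ℂ | ‖z‖ < r})
    (hG : DifferentiableOn ℂ G {z : ℂ | ‖z‖ < r})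
    (hfe : ∀ z : ℂ, 0 < ‖z‖ → ‖z‖ < r →
      f z = (∑ k ∈ Finset.range (n + 1), a k * z ^ (2 * (k : ℤ) - (n : ℤ)))
        + z ^ (n + 1) * F z)
    (hge : ∀ z : ℂ, 0 < ‖z‖ → ‖z‖ < r →
      g z = (∑ k ∈ Finset.range (n + 1), b k * z ^ (2 * (k : ℤ) - (n : ℤ)))
        + z ^ (n + 1) * G z) :
    ∀ ρ : ℝ, 0 < ρ → ρ < r → (∮ z in C(0, ρ), f z * g z) = 0 := by
  intro ρ hρ hρr
  have hball : {z : ℂ | ‖z‖ < r} = Metric.ball (0 : ℂ) r := by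
    ext z; simp [Metric.mem_ball, Complex.dist_eq]
  rw [hball] at hF hG
  set P : ℂ → ℂ := fun z => ∑ p ∈ Finset.range (n + 1) ×ˢ Finset.range (n + 1),
    a p.1 * b p.2 * z ^ (2 * (p.1 : ℤ) - n + (2 * (p.2 : ℤ) - n)) with hP
  set H : ℂ → ℂ := fun z =>
    (∑ k ∈ Finset.range (n + 1), a k * z ^ (2 * k + 1)) * G z
    + ((∑ k ∈ Finset.range (n + 1), b k * z ^ (2 * k + 1)) * F z
    + z ^ (2 * n + 2) * (F z * G z)) with hH
  -- H is differentiable on the ball of radius r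
  have hHd : DifferentiableOn ℂ H (Metric.ball (0 : ℂ) r) := by
    apply DifferentiableOn.add
    · exact (DifferentiableOn.fun_sum fun k _ =>
        (differentiable_const _).differentiableOn.mul
          (Differentiable.differentiableOn (by fun_prop))).mul hG
    apply DifferentiableOn.add
    · exact (DifferentiableOn.fun_sum fun k _ =>
        (differentiable_const _).differentiableOn.mul
          (Differentiable.differentiableOn (by fun_prop))).mul hF
    · exact (Differentiable.differentiableOn (by fun_prop)).mul (hF.mul hG)
  -- key pointwise identity
  have key : ∀ z : ℂ, z ≠ 0 → ‖z‖ < r → f z * g z = P z + H z := by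
    intro z hz0 hzr
    have hzpos : 0 < ‖z‖ := norm_pos_iff.mpr hz0
    rw [hfe z hzpos hzr, hge z hzpos hzr]
    have hmul : ∀ m : ℤ, ∀ p : ℕ, z ^ m * z ^ p = z ^ (m + p) := fun m p => by
      rw [← zpow_natCast z p, ← zpow_add₀ hz0]
    have e1 : (∑ k ∈ Finset.range (n + 1), a k * z ^ (2 * (k : ℤ) - (n : ℤ)))
        * (∑ k ∈ Finset.range (n + 1), b k * z ^ (2 * (k : ℤ) - (n : ℤ))) = P z := by
      rw [hP, Finset.sum_mul_sum, ← Finset.sum_product']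
      refine Finset.sum_congr rfl fun p _ => ?_
      rw [mul_mul_mul_comm, ← zpow_add₀ hz0]
    have e2 : (∑ k ∈ Finset.range (n + 1), a k * z ^ (2 * (k : ℤ) - (n : ℤ)))
        * (z ^ (n + 1) * G z)
        = (∑ k ∈ Finset.range (n + 1), a k * z ^ (2 * k + 1)) * G z := by
      rw [← mul_assoc, Finset.sum_mul]
      congr 1
      refine Finset.sum_congr rfl fun k _ => ?_
      rw [mul_assoc, hmul]
      congr 1
      rw [← zpow_natCast z (2 * k + 1)]
      congr 1
      push_cast; ring
    have e3 : z ^ (n + 1) * F z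
        * (∑ k ∈ Finset.range (n + 1), b k * z ^ (2 * (k : ℤ) - (n : ℤ)))
        = (∑ k ∈ Finset.range (n + 1), b k * z ^ (2 * k + 1)) * F z := by
      rw [mul_comm (z ^ (n + 1)) (F z), mul_assoc, Finset.mul_sum, mul_comm]
      congr 1
      refine Finset.sum_congr rfl fun k _ => ?_
      rw [mul_comm (z ^ (n+1)), mul_assoc, hmul]
      congr 1
      rw [← zpow_natCast z (2 * k + 1)]
      congr 1
      push_cast; ring
    have e4 : z ^ (n + 1) * F z * (z ^ (n + 1) * G z)
        = z ^ (2 * n + 2) * (F z * G z) := by ring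
    rw [add_mul, mul_add, mul_add, e1, e2, e3, e4, hH]
    ring
  -- rewrite the integral
  have hsphere : ∀ z ∈ Metric.sphere (0 : ℂ) ρ, z ≠ 0 ∧ ‖z‖ < r := by
    intro z hz
    rw [Metric.mem_sphere, Complex.dist_eq, sub_zero] at hz
    refine ⟨fun h => ?_, by rw [hz]; exact hρr⟩
    rw [h] at hz; simp at hz; linarith
  have heq : (∮ z in C(0, ρ), f z * g z) = ∮ z in C(0, ρ), P z + H z := by
    refine circleIntegral.integral_congr hρ.le fun z hz => ?_
    obtain ⟨h1, h2⟩ := hsphere z hz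
    exact key z h1 h2
  -- integrability
  have hsub : Metric.sphere (0 : ℂ) ρ ⊆ Metric.ball (0 : ℂ) r := fun z hz => by
    rw [Metric.mem_sphere] at hz; rw [Metric.mem_ball, hz]; exact hρr
  have hPi : ∀ p ∈ Finset.range (n + 1) ×ˢ Finset.range (n + 1),
      CircleIntegrable (fun z : ℂ =>
        a p.1 * b p.2 * z ^ (2 * (p.1 : ℤ) - n + (2 * (p.2 : ℤ) - n))) 0 ρ := by
    intro p _
    refine ContinuousOn.circleIntegrable hρ.le ?_
    refine continuousOn_const.mul ?_
    refine ContinuousOn.zpow₀ continuousOn_id _ fun z hz => Or.inl ?_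
    exact (hsphere z hz).1
  have hPci : CircleIntegrable P 0 ρ := by
    refine ContinuousOn.circleIntegrable hρ.le ?_
    rw [hP]
    refine continuousOn_finset_sum _ fun p _ => continuousOn_const.mul ?_
    exact ContinuousOn.zpow₀ continuousOn_id _ fun z hz => Or.inl (hsphere z hz).1
  have hHci : CircleIntegrable H 0 ρ :=
    ContinuousOn.circleIntegrable hρ.le ((hHd.continuousOn).mono hsub)
  rw [heq, circleIntegral_add' hPci hHci]
  -- the polynomial-like part
  have hPzero : (∮ z in C(0, ρ), P z) = 0 := by
    rw [hP, circleIntegral_finset_sum' _ hPi]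
    refine Finset.sum_eq_zero fun p _ => ?_
    rw [circleIntegral.integral_const_mul]
    have : (∮ z in C(0, ρ), z ^ (2 * (p.1 : ℤ) - n + (2 * (p.2 : ℤ) - n))) = 0 := by
      have := circleIntegral.integral_sub_zpow_of_ne
        (n := 2 * (p.1 : ℤ) - n + (2 * (p.2 : ℤ) - n)) (by omega) 0 0 ρ
      simpa using this
    rw [this, mul_zero]
  -- the holomorphic part
  have hHzero : (∮ z in C(0, ρ), H z) = 0 := by
    refine Complex.circleIntegral_eq_zero_of_differentiable_on_off_countable hρ.le
      Set.countable_empty (hHd.continuousOn.mono ?_) fun z hz => ?_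
    · exact fun z hz => lt_of_le_of_lt (Metric.mem_closedBall.mp hz) hρr
    · exact hHd.differentiableAt (Metric.isOpen_ball.mem_nhds
        (Metric.mem_ball.mpr (lt_trans (Metric.mem_ball.mp hz.1) hρr)))
  rw [hPzero, hHzero, add_zero]
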